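/- arXiv:2307.06685 — 2 statements merged into one kernel-verified Lean document; each statement's English description precedes it below -/
import Mathlib

section
/- Let q ≥ 2 be an integer and let X be a random variable with values in [0,1) whose law is absolutely continuous with density f concentrated on (0,1). Then d_TV(P_n, μ) → 0 as n → ∞, where P_n is the law of T^n(X). -/
open MeasureTheory Set Filter

/-- The base-`q` map `T(x) = q·x − ⌊q·x⌋`. -/
noncomputable def T (q : ℕ) : ℝ → ℝ := fun x => Int.fract ((q : ℝ) * x)

/-- Total variation distance `d_TV(ν₁,ν₂) = sup_{Borel A} |ν₁(A) − ν₂(A)|`. -/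
noncomputable def dTV (ν₁ ν₂ : Measure ℝ) : ℝ :=
  ⨆ A : {A : Set ℝ // MeasurableSet A}, |(ν₁ A.1).toReal - (ν₂ A.1).toReal|

lemma T_iter (q : ℕ) (n : ℕ) {x : ℝ} (hx : x ∈ Set.Ico (0:ℝ) 1) :
    (T q)^[n] x = Int.fract ((q:ℝ)^n * x) := by
  induction n with
  | zero => simp [Int.fract_eq_self.2 ⟨hx.1, hx.2⟩]
  | succ n ih =>
    rw [Function.iterate_succ_apply', ih, T]
    have h1 : (q:ℝ) * Int.fract ((q:ℝ)^n * x)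
        = (q:ℝ)^(n+1) * x - (((q : ℤ) * ⌊(q:ℝ)^n * x⌋ : ℤ) : ℝ) := by
      rw [Int.fract]; push_cast; ring
    rw [h1, Int.fract_sub_intCast]

lemma vol_affine (Q : ℝ) (hQ : 0 < Q) (k : ℝ) (A : Set ℝ) :
    volume ((fun x => Q * x - k) ⁻¹' A) = ENNReal.ofReal (1/Q) * volume A := by
  have h1 : (fun x : ℝ => Q * x - k) = (fun y : ℝ => y + (-k)) ∘ (fun x : ℝ => Q * x) := by
    funext x; simp [sub_eq_add_neg]
  rw [h1, Set.preimage_comp]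
  have h2 : (fun x : ℝ => Q * x) = (Q * ·) := rfl
  rw [h2, Real.volume_preimage_mul_left (ne_of_gt hQ), measure_preimage_add_right]
  rw [abs_of_pos (inv_pos.2 hQ), one_div]

lemma exists_cell (Qm : ℕ) (hQm : 0 < Qm) {x : ℝ} (hx : x ∈ Set.Ico (0:ℝ) 1) :
    ∃ j : ℕ, j < Qm ∧ x ∈ Set.Ico ((j:ℝ)/Qm) (((j:ℝ)+1)/Qm) := by
  have hQ : (0:ℝ) < Qm := by exact_mod_cast hQm
  have h0 : (0:ℝ) ≤ (Qm:ℝ) * x := by nlinarith [hx.1]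
  have hfl0 : 0 ≤ ⌊(Qm:ℝ) * x⌋ := Int.floor_nonneg.2 h0
  have hcast : ((⌊(Qm:ℝ) * x⌋.toNat : ℕ) : ℝ) = (⌊(Qm:ℝ) * x⌋ : ℝ) := by
    exact_mod_cast congrArg (fun z : ℤ => (z : ℝ)) (Int.toNat_of_nonneg hfl0)
  have hle : (⌊(Qm:ℝ) * x⌋ : ℝ) ≤ (Qm:ℝ) * x := Int.floor_le _
  have hlt1 : (Qm:ℝ) * x < (⌊(Qm:ℝ) * x⌋ : ℝ) + 1 := Int.lt_floor_add_one _
  refine ⟨(⌊(Qm:ℝ) * x⌋).toNat, ?_, ?_, ?_⟩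
  · have hlt : ((Qm:ℝ) * x) < Qm := by nlinarith [hx.2]
    have h2 : ⌊(Qm:ℝ) * x⌋ < (Qm:ℤ) := by
      have : (⌊(Qm:ℝ) * x⌋ : ℝ) < Qm := lt_of_le_of_lt hle hlt
      exact_mod_cast this
    omega
  · rw [div_le_iff₀ hQ, hcast, mul_comm x]; exact hle
  · rw [lt_div_iff₀ hQ, hcast, mul_comm x]; exact hlt1

lemma preimage_inter_cell (Qm R : ℕ) (hQm : 0 < Qm) (hR : 0 < R) (j : ℕ)
    (A : Set ℝ) (hA : A ⊆ Set.Ico (0:ℝ) 1) :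
    {x : ℝ | Int.fract ((Qm:ℝ) * (R:ℝ) * x) ∈ A} ∩ Set.Ico ((j:ℝ)/Qm) (((j:ℝ)+1)/Qm)
      = ⋃ i ∈ Finset.range R, (fun x => (Qm:ℝ) * (R:ℝ) * x - ((j*R + i : ℕ):ℝ)) ⁻¹' A := by
  have hQm' : (0:ℝ) < (Qm:ℝ) := by exact_mod_cast hQm
  have hR' : (0:ℝ) < (R:ℝ) := by exact_mod_cast hR
  ext x
  simp only [Set.mem_inter_iff, Set.mem_setOf_eq, Set.mem_Ico, Set.mem_iUnion,
    Finset.mem_range, Set.mem_preimage, exists_prop]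
  constructor
  · rintro ⟨hfr, hx1, hx2⟩
    have hb1 : ((j:ℝ) * R) ≤ (Qm:ℝ) * R * x := by
      rw [div_le_iff₀ hQm'] at hx1; nlinarith
    have hb2 : (Qm:ℝ) * R * x < ((j:ℝ)+1) * R := by
      rw [lt_div_iff₀ hQm'] at hx2; nlinarith
    set k := ⌊(Qm:ℝ) * R * x⌋ with hk
    have hk1 : (j*R : ℤ) ≤ k := Int.le_floor.2 (by push_cast; linarith)
    have hk2 : k < (j*R + R : ℤ) := Int.floor_lt.2 (by push_cast; nlinarith)
    refine ⟨(k - j*R).toNat, by omega, ?_⟩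
    have hnn : (((k - (j:ℤ)*R).toNat : ℤ) : ℝ) = ((k : ℝ) - (j:ℝ)*R) := by
      have h := Int.toNat_of_nonneg (by omega : (0:ℤ) ≤ k - (j:ℤ)*R)
      have h2 := congrArg (fun z : ℤ => (z:ℝ)) h
      push_cast at h2 ⊢; linarith [h2]
    have hcast : ((j*R + (k - j*R).toNat : ℕ) : ℝ) = (k : ℝ) := by
      push_cast at hnn ⊢; linarith [hnn]
    rw [hcast, hk, Int.self_sub_floor]
    exact hfr
  · rintro ⟨i, hiR, hmem⟩
    have h01 := hA hmem
    have hi1 : (i:ℝ) + 1 ≤ (R:ℝ) := by exact_mod_cast Nat.succ_le_of_lt hiR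
    have hcast : ((j*R + i : ℕ) : ℝ) = (j:ℝ)*R + i := by push_cast; ring
    have hc1 : (j:ℝ)*R + i ≤ (Qm:ℝ)*R*x := by
      have := h01.1; rw [hcast] at this; linarith [this]
    have hc2 : (Qm:ℝ)*R*x < (j:ℝ)*R + i + 1 := by
      have := h01.2; rw [hcast] at this; linarith [this]
    have hfl : ⌊(Qm:ℝ)*R*x⌋ = ((j*R + i : ℕ) : ℤ) := by
      rw [Int.floor_eq_iff]
      constructor <;> push_cast <;> linarith
    refine ⟨?_, ?_, ?_⟩
    · show Int.fract _ ∈ A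
      have : Int.fract ((Qm:ℝ)*R*x) = (Qm:ℝ)*R*x - ((j*R + i : ℕ):ℝ) := by
        rw [Int.fract, hfl]; push_cast; ring
      rw [this]; exact hmem
    · rw [div_le_iff₀ hQm']
      nlinarith
    · rw [lt_div_iff₀ hQm']
      nlinarith

lemma vol_preimage_inter_cell (Qm R : ℕ) (hQm : 0 < Qm) (hR : 0 < R) (j : ℕ)
    (A : Set ℝ) (hA : A ⊆ Set.Ico (0:ℝ) 1) (hAm : MeasurableSet A) :
    volume ({x : ℝ | Int.fract ((Qm:ℝ) * (R:ℝ) * x) ∈ A} ∩ Set.Ico ((j:ℝ)/Qm) (((j:ℝ)+1)/Qm))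
      = ENNReal.ofReal (1/(Qm:ℝ)) * volume A := by
  have hQm' : (0:ℝ) < Qm := by exact_mod_cast hQm
  have hR' : (0:ℝ) < R := by exact_mod_cast hR
  have hQ : (0:ℝ) < (Qm:ℝ)*R := mul_pos hQm' hR'
  rw [preimage_inter_cell Qm R hQm hR j A hA]
  have hdisj : (↑(Finset.range R) : Set ℕ).PairwiseDisjoint
      (fun i => (fun x => (Qm:ℝ)*(R:ℝ)*x - ((j*R+i:ℕ):ℝ)) ⁻¹' A) := by
    intro i _ i' _ hne
    rw [Function.onFun]
    apply Set.disjoint_left.2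
    intro x h1 h2
    have a1 := hA h1
    have a2 := hA h2
    simp only [Set.mem_Ico] at a1 a2
    rcases lt_or_gt_of_ne hne with h | h
    · have hd : ((j*R+i:ℕ):ℝ) + 1 ≤ ((j*R+i':ℕ):ℝ) := by
        have : (i:ℝ)+1 ≤ (i':ℝ) := by exact_mod_cast Nat.succ_le_of_lt h
        push_cast; linarith
      linarith [a1.1, a1.2, a2.1, a2.2]
    · have hd : ((j*R+i':ℕ):ℝ) + 1 ≤ ((j*R+i:ℕ):ℝ) := by
        have : (i':ℝ)+1 ≤ (i:ℝ) := by exact_mod_cast Nat.succ_le_of_lt h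
        push_cast; linarith
      linarith [a1.1, a1.2, a2.1, a2.2]
  have hmeas : ∀ i ∈ Finset.range R,
      MeasurableSet ((fun x => (Qm:ℝ)*(R:ℝ)*x - ((j*R+i:ℕ):ℝ)) ⁻¹' A) := by
    intro i _
    exact ((measurable_id.const_mul ((Qm:ℝ)*(R:ℝ))).sub measurable_const) hAm
  rw [measure_biUnion_finset hdisj hmeas]
  have hvol : ∀ i ∈ Finset.range R,
      volume ((fun x => (Qm:ℝ)*(R:ℝ)*x - ((j*R+i:ℕ):ℝ)) ⁻¹' A)
        = ENNReal.ofReal (1/((Qm:ℝ)*(R:ℝ))) * volume A :=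
    fun i _ => vol_affine _ hQ _ A
  rw [Finset.sum_congr rfl hvol, Finset.sum_const, Finset.card_range, nsmul_eq_mul,
    ← mul_assoc]
  congr 1
  rw [← ENNReal.ofReal_natCast R, ← ENNReal.ofReal_mul (by positivity)]
  congr 1
  field_simp

lemma step_apply (Qm : ℕ) (hQm : 0 < Qm) (a : ℕ → ℝ) {j : ℕ} (hj : j < Qm) {x : ℝ}
    (hx : x ∈ Set.Ico ((j:ℝ)/Qm) (((j:ℝ)+1)/Qm)) :
    (∑ j' ∈ Finset.range Qm,
      (Set.Ico ((j':ℝ)/Qm) (((j':ℝ)+1)/Qm)).indicator (fun _ => a j') x) = a j := by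
  have hQ : (0:ℝ) < Qm := by exact_mod_cast hQm
  rw [Finset.sum_eq_single_of_mem j (Finset.mem_range.2 hj)]
  · exact Set.indicator_of_mem hx _
  · intro j' _ hne
    apply Set.indicator_of_notMem
    intro hx'
    apply hne
    obtain ⟨h1, h2⟩ := hx
    obtain ⟨h1', h2'⟩ := hx'
    rw [div_le_iff₀ hQ] at h1 h1'
    rw [lt_div_iff₀ hQ] at h2 h2'
    have e1 : (j':ℝ) < (j:ℝ)+1 := by nlinarith
    have e2 : (j:ℝ) < (j':ℝ)+1 := by nlinarith
    have e1' : j' < j+1 := by exact_mod_cast e1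
    have e2' : j < j'+1 := by exact_mod_cast e2
    omega

lemma step_zero (Qm : ℕ) (hQm : 0 < Qm) (a : ℕ → ℝ) {x : ℝ} (hx : x ∉ Set.Ico (0:ℝ) 1) :
    (∑ j' ∈ Finset.range Qm,
      (Set.Ico ((j':ℝ)/Qm) (((j':ℝ)+1)/Qm)).indicator (fun _ => a j') x) = 0 := by
  have hQ : (0:ℝ) < Qm := by exact_mod_cast hQm
  apply Finset.sum_eq_zero
  intro j' hj'
  apply Set.indicator_of_notMem
  intro hx'
  apply hx
  have hj : (j':ℝ)+1 ≤ Qm := by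
    exact_mod_cast Nat.succ_le_of_lt (Finset.mem_range.1 hj')
  constructor
  · have h0 : (0:ℝ) ≤ (j':ℝ)/Qm := by positivity
    linarith [hx'.1]
  · have h1 : ((j':ℝ)+1)/Qm ≤ 1 := by rw [div_le_one hQ]; exact hj
    linarith [hx'.2]

lemma lintegral_abs_bound {u v : ℝ → ℝ} (hu_meas : Measurable u) (hv_meas : Measurable v)
    (hu : ∀ x, 0 ≤ u x) (hv : ∀ x, 0 ≤ v x)
    {B : Set ℝ} (hB : MeasurableSet B)
    (hU : ∫⁻ x in B, ENNReal.ofReal (u x) ≠ ⊤) (hV : ∫⁻ x in B, ENNReal.ofReal (v x) ≠ ⊤)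
    (hΔ : ∫⁻ x, ENNReal.ofReal |u x - v x| ≠ ⊤) :
    |(∫⁻ x in B, ENNReal.ofReal (u x)).toReal - (∫⁻ x in B, ENNReal.ofReal (v x)).toReal|
      ≤ (∫⁻ x, ENNReal.ofReal |u x - v x|).toReal := by
  set U := ∫⁻ x in B, ENNReal.ofReal (u x) with hUdef
  set V := ∫⁻ x in B, ENNReal.ofReal (v x) with hVdef
  set D := ∫⁻ x, ENNReal.ofReal |u x - v x| with hDdef
  have hDB : ∫⁻ x in B, ENNReal.ofReal |u x - v x| ≤ D :=
    setLIntegral_le_lintegral _ _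
  have h1 : U ≤ V + D := by
    calc U ≤ ∫⁻ x in B, (ENNReal.ofReal (v x) + ENNReal.ofReal |u x - v x|) := by
          apply lintegral_mono; intro x
          simp only []
          rw [← ENNReal.ofReal_add (hv x) (abs_nonneg _)]
          apply ENNReal.ofReal_le_ofReal
          have := le_abs_self (u x - v x)
          linarith
      _ = V + ∫⁻ x in B, ENNReal.ofReal |u x - v x| :=
          lintegral_add_left (ENNReal.measurable_ofReal.comp hv_meas) _
      _ ≤ V + D := add_le_add le_rfl hDB
  have h2 : V ≤ U + D := by
    calc V ≤ ∫⁻ x in B, (ENNReal.ofReal (u x) + ENNReal.ofReal |u x - v x|) := by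
          apply lintegral_mono; intro x
          simp only []
          rw [← ENNReal.ofReal_add (hu x) (abs_nonneg _)]
          apply ENNReal.ofReal_le_ofReal
          have h := neg_abs_le (u x - v x)
          linarith
      _ = U + ∫⁻ x in B, ENNReal.ofReal |u x - v x| :=
          lintegral_add_left (ENNReal.measurable_ofReal.comp hu_meas) _
      _ ≤ U + D := add_le_add le_rfl hDB
  have t1 : U.toReal ≤ V.toReal + D.toReal := by
    have := ENNReal.toReal_mono (ENNReal.add_ne_top.2 ⟨hV, hΔ⟩) h1
    rwa [ENNReal.toReal_add hV hΔ] at this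
  have t2 : V.toReal ≤ U.toReal + D.toReal := by
    have := ENNReal.toReal_mono (ENNReal.add_ne_top.2 ⟨hU, hΔ⟩) h2
    rwa [ENNReal.toReal_add hU hΔ] at this
  rw [abs_sub_le_iff]
  constructor <;> linarith

lemma step_exact (Qm R : ℕ) (hQm : 0 < Qm) (hR : 0 < R) (a : ℕ → ℝ) (ha : ∀ j, 0 ≤ a j)
    (A : Set ℝ) (hA : A ⊆ Set.Ico (0:ℝ) 1) (hAm : MeasurableSet A) :
    ∫⁻ x in {x : ℝ | Int.fract ((Qm:ℝ) * (R:ℝ) * x) ∈ A},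
        ENNReal.ofReal (∑ j ∈ Finset.range Qm,
          (Set.Ico ((j:ℝ)/Qm) (((j:ℝ)+1)/Qm)).indicator (fun _ => a j) x)
      = ((∑ j ∈ Finset.range Qm, ENNReal.ofReal (a j)) * ENNReal.ofReal (1/(Qm:ℝ)))
          * volume A := by
  set B := {x : ℝ | Int.fract ((Qm:ℝ) * (R:ℝ) * x) ∈ A} with hBdef
  have hpt : ∀ x, ENNReal.ofReal (∑ j ∈ Finset.range Qm,
        (Set.Ico ((j:ℝ)/Qm) (((j:ℝ)+1)/Qm)).indicator (fun _ => a j) x)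
      = ∑ j ∈ Finset.range Qm,
        (Set.Ico ((j:ℝ)/Qm) (((j:ℝ)+1)/Qm)).indicator (fun _ => ENNReal.ofReal (a j)) x := by
    intro x
    rw [ENNReal.ofReal_sum_of_nonneg
      (fun j _ => Set.indicator_nonneg (fun _ _ => ha j) x)]
    apply Finset.sum_congr rfl
    intro j _
    by_cases hx : x ∈ Set.Ico ((j:ℝ)/Qm) (((j:ℝ)+1)/Qm) <;> simp [hx]
  calc ∫⁻ x in B, ENNReal.ofReal (∑ j ∈ Finset.range Qm,
          (Set.Ico ((j:ℝ)/Qm) (((j:ℝ)+1)/Qm)).indicator (fun _ => a j) x)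
      = ∫⁻ x in B, ∑ j ∈ Finset.range Qm,
          (Set.Ico ((j:ℝ)/Qm) (((j:ℝ)+1)/Qm)).indicator (fun _ => ENNReal.ofReal (a j)) x := by
        exact lintegral_congr hpt
    _ = ∑ j ∈ Finset.range Qm, ∫⁻ x in B,
          (Set.Ico ((j:ℝ)/Qm) (((j:ℝ)+1)/Qm)).indicator (fun _ => ENNReal.ofReal (a j)) x := by
        exact lintegral_finset_sum' _ (fun j _ => (measurable_const.indicator measurableSet_Ico).aemeasurable)
    _ = ∑ j ∈ Finset.range Qm, ENNReal.ofReal (a j)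
          * (ENNReal.ofReal (1/(Qm:ℝ)) * volume A) := by
        apply Finset.sum_congr rfl
        intro j _
        rw [lintegral_indicator measurableSet_Ico, setLIntegral_const,
          Measure.restrict_apply measurableSet_Ico, Set.inter_comm,
          vol_preimage_inter_cell Qm R hQm hR j A hA hAm]
    _ = ((∑ j ∈ Finset.range Qm, ENNReal.ofReal (a j)) * ENNReal.ofReal (1/(Qm:ℝ)))
          * volume A := by
        rw [← Finset.sum_mul, mul_assoc]

theorem stmt13
    {Ω : Type*} [MeasurableSpace Ω] (ℙ : Measure Ω) [IsProbabilityMeasure ℙ]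
    (q : ℕ) (hq : 2 ≤ q)
    (f : ℝ → ℝ) (hf_meas : Measurable f) (hf_nonneg : ∀ x, 0 ≤ f x)
    (hf_supp : ∀ x, x ∉ Set.Ioo (0:ℝ) 1 → f x = 0)
    (X : Ω → ℝ) (hX : Measurable X) (hXrange : ∀ ω, X ω ∈ Set.Ico (0:ℝ) 1)
    (hlaw : Measure.map X ℙ = volume.withDensity (fun x => ENNReal.ofReal (f x))) :
    Tendsto (fun n : ℕ =>
        dTV (Measure.map (fun ω => (T q)^[n] (X ω)) ℙ)
          (volume.restrict (Set.Ico (0:ℝ) 1)))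
      atTop (nhds 0) := by
  have hq1 : (1:ℝ) < q := by exact_mod_cast hq.trans_lt' one_lt_two
  have htot : ∫⁻ x, ENNReal.ofReal (f x) = 1 := by
    have h1 : Measure.map X ℙ Set.univ = 1 := by
      rw [Measure.map_apply hX MeasurableSet.univ]; simp
    rw [hlaw] at h1
    rwa [withDensity_apply _ MeasurableSet.univ, Measure.restrict_univ] at h1
  have hf_int : Integrable f := by
    refine ⟨hf_meas.aestronglyMeasurable, ?_⟩
    rw [hasFiniteIntegral_iff_norm]
    have hcongr : ∀ x : ℝ, ENNReal.ofReal ‖f x‖ = ENNReal.ofReal (f x) := fun x => by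
      rw [Real.norm_eq_abs, abs_of_nonneg (hf_nonneg x)]
    rw [lintegral_congr hcongr, htot]
    exact ENNReal.one_lt_top
  rw [Metric.tendsto_atTop]
  intro ε hε
  set ε₁ := ε/16 with hε₁def
  have hε₁ : 0 < ε₁ := by positivity
  obtain ⟨g, hg_supp, hg_close, hg_cont, _⟩ :=
    hf_int.exists_hasCompactSupport_lintegral_sub_le
      (ε := ENNReal.ofReal ε₁) (ENNReal.ofReal_pos.2 hε₁).ne'
  set g' : ℝ → ℝ := fun x => max (g x) 0 with hg'def
  have hg'_cont : Continuous g' := hg_cont.max continuous_const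
  have hg'_nonneg : ∀ x, 0 ≤ g' x := fun x => le_max_right _ _
  have hg'_supp : HasCompactSupport g' :=
    hg_supp.comp_left (g := fun y : ℝ => max y 0) (by simp)
  have hg'_close : (∫⁻ x, ENNReal.ofReal |f x - g' x|) ≤ ENNReal.ofReal ε₁ := by
    refine le_trans (lintegral_mono fun x => ?_) hg_close
    rw [← ofReal_norm, Real.norm_eq_abs]
    apply ENNReal.ofReal_le_ofReal
    rcases le_or_gt 0 (g x) with hgx | hgx
    · have : g' x = g x := max_eq_left hgx
      rw [this]
    · have h0 : g' x = 0 := max_eq_right hgx.le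
      rw [h0, sub_zero, abs_of_nonneg (hf_nonneg x)]
      calc f x ≤ f x - g x := by linarith
        _ ≤ |f x - g x| := le_abs_self _
  have hg'_uc : UniformContinuous g' :=
    hg'_supp.uniformContinuous_of_continuous hg'_cont
  rw [Metric.uniformContinuous_iff] at hg'_uc
  obtain ⟨δ, hδ, hδ'⟩ := hg'_uc ε₁ hε₁
  obtain ⟨m, hm⟩ := pow_unbounded_of_one_lt (1/δ) hq1
  set Qm : ℕ := q^m with hQmdef
  have hQm : 0 < Qm := Nat.pow_pos (by omega)
  have hQm' : (0:ℝ) < Qm := by exact_mod_cast hQm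
  have hQmδ : 1/(Qm:ℝ) < δ := by
    have hcast : ((Qm:ℕ):ℝ) = (q:ℝ)^m := by push_cast [hQmdef]; ring
    have h2 : 1/δ < (Qm:ℝ) := by rw [hcast]; exact hm
    rw [div_lt_iff₀ hQm']
    rw [div_lt_iff₀ hδ] at h2
    nlinarith
  set a : ℕ → ℝ := fun j => g' ((j:ℝ)/Qm) with hadef
  have ha_nonneg : ∀ j, 0 ≤ a j := fun j => hg'_nonneg _
  set h : ℝ → ℝ := fun x => ∑ j ∈ Finset.range Qm,
    (Set.Ico ((j:ℝ)/Qm) (((j:ℝ)+1)/Qm)).indicator (fun _ => a j) x with hhdef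
  have hh_meas : Measurable h :=
    Finset.measurable_sum _ (fun j _ => measurable_const.indicator measurableSet_Ico)
  have hh_nonneg : ∀ x, 0 ≤ h x := fun x =>
    Finset.sum_nonneg fun j _ => Set.indicator_nonneg (fun _ _ => ha_nonneg j) x
  set Δ := ∫⁻ x, ENNReal.ofReal |f x - h x| with hΔdef
  have hΔ_le : Δ ≤ ENNReal.ofReal (2*ε₁) := by
    have hpt : ∀ x, ENNReal.ofReal |f x - h x|
        ≤ ENNReal.ofReal |f x - g' x|
          + (Set.Ico (0:ℝ) 1).indicator (fun _ => ENNReal.ofReal ε₁) x := by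
      intro x
      by_cases hx : x ∈ Set.Ico (0:ℝ) 1
      · obtain ⟨j, hj, hxj⟩ := exists_cell Qm hQm hx
        have hhx : h x = a j := step_apply Qm hQm a hj hxj
        have hdist : |x - (j:ℝ)/Qm| < δ := by
          rw [abs_of_nonneg (by linarith [hxj.1])]
          have h1q : ((j:ℝ)+1)/Qm - (j:ℝ)/Qm = 1/Qm := by ring
          have := hxj.2
          linarith [hxj.1]
        have hga : |g' x - a j| < ε₁ := by
          have := hδ' (a := x) (b := (j:ℝ)/Qm) (by rwa [Real.dist_eq])
          rwa [Real.dist_eq] at this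
        rw [Set.indicator_of_mem hx, hhx,
          ← ENNReal.ofReal_add (abs_nonneg _) hε₁.le]
        apply ENNReal.ofReal_le_ofReal
        calc |f x - a j| ≤ |f x - g' x| + |g' x - a j| := abs_sub_le _ _ _
          _ ≤ |f x - g' x| + ε₁ := by linarith
      · have hfx : f x = 0 := hf_supp x (fun hx' => hx ⟨hx'.1.le, hx'.2⟩)
        have hhx : h x = 0 := step_zero Qm hQm a hx
        simp [hfx, hhx]
    calc Δ ≤ ∫⁻ x, (ENNReal.ofReal |f x - g' x|
          + (Set.Ico (0:ℝ) 1).indicator (fun _ => ENNReal.ofReal ε₁) x) :=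
        lintegral_mono hpt
      _ = (∫⁻ x, ENNReal.ofReal |f x - g' x|)
          + ∫⁻ x, (Set.Ico (0:ℝ) 1).indicator (fun _ => ENNReal.ofReal ε₁) x :=
        lintegral_add_left
          (ENNReal.measurable_ofReal.comp ((hf_meas.sub hg'_cont.measurable).abs)) _
      _ ≤ ENNReal.ofReal ε₁ + ENNReal.ofReal ε₁ := by
        apply add_le_add hg'_close
        rw [lintegral_indicator measurableSet_Ico, setLIntegral_const]
        simp [Real.volume_Ico]
      _ = ENNReal.ofReal (2*ε₁) := by
        rw [← ENNReal.ofReal_add hε₁.le hε₁.le]; ring_nf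
  have hΔ_ne : Δ ≠ ⊤ := (lt_of_le_of_lt hΔ_le ENNReal.ofReal_lt_top).ne
  have hΔ_toReal : Δ.toReal ≤ 2*ε₁ :=
    ENNReal.toReal_le_of_le_ofReal (by positivity) hΔ_le
  set cE := (∑ j ∈ Finset.range Qm, ENNReal.ofReal (a j)) * ENNReal.ofReal (1/(Qm:ℝ))
    with hcEdef
  have hcE_ne : cE ≠ ⊤ :=
    ENNReal.mul_ne_top (ENNReal.sum_lt_top.2 fun j _ => ENNReal.ofReal_lt_top).ne
      ENNReal.ofReal_ne_top
  have hhE_total : ∫⁻ x, ENNReal.ofReal (h x) = cE := by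
    have hst := step_exact Qm 1 hQm one_pos a ha_nonneg (Set.Ico 0 1)
      subset_rfl measurableSet_Ico
    have huniv : {x : ℝ | Int.fract ((Qm:ℝ)*((1:ℕ):ℝ)*x) ∈ Set.Ico (0:ℝ) 1}
        = Set.univ := by
      ext x; simp [Int.fract_nonneg, Int.fract_lt_one]
    rw [huniv, Measure.restrict_univ] at hst
    rw [hhdef, hst, hcEdef, Real.volume_Ico]
    simp
  have hc1 : |cE.toReal - 1| ≤ Δ.toReal := by
    have hb := lintegral_abs_bound hf_meas hh_meas hf_nonneg hh_nonneg
      (B := Set.univ) MeasurableSet.univ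
      (by rw [Measure.restrict_univ, htot]; exact ENNReal.one_ne_top)
      (by rw [Measure.restrict_univ, hhE_total]; exact hcE_ne) hΔ_ne
    rw [Measure.restrict_univ, htot, hhE_total, ENNReal.toReal_one] at hb
    rw [abs_sub_comm] at hb
    exact hb
  refine ⟨m, fun n hn => ?_⟩
  set R : ℕ := q^(n-m) with hRdef
  have hRpos : 0 < R := Nat.pow_pos (by omega)
  have hQn : (q:ℝ)^n = (Qm:ℝ)*(R:ℝ) := by
    rw [hQmdef, hRdef]; push_cast
    rw [← pow_add]
    congr 1
    omega
  set S : ℝ → ℝ := fun x => Int.fract ((Qm:ℝ)*(R:ℝ)*x) with hSdef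
  have hS_meas : Measurable S := (measurable_id.const_mul _).fract
  have hmapeq : (fun ω => (T q)^[n] (X ω)) = S ∘ X := by
    funext ω
    show (T q)^[n] (X ω) = S (X ω)
    rw [T_iter q n (hXrange ω), hSdef, hQn]
  have hPn : Measure.map (fun ω => (T q)^[n] (X ω)) ℙ
      = Measure.map S (volume.withDensity (fun x => ENNReal.ofReal (f x))) := by
    rw [hmapeq, ← Measure.map_map hS_meas hX, hlaw]
  have hbound : ∀ (A : Set ℝ), MeasurableSet A →
      |(Measure.map (fun ω => (T q)^[n] (X ω)) ℙ A).toReal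
        - (volume.restrict (Set.Ico (0:ℝ) 1) A).toReal| ≤ 4*ε₁ := by
    intro A hAm
    rw [hPn, Measure.map_apply hS_meas hAm, Measure.restrict_apply hAm]
    set A' := A ∩ Set.Ico (0:ℝ) 1 with hA'def
    have hA'm : MeasurableSet A' := hAm.inter measurableSet_Ico
    have hA'sub : A' ⊆ Set.Ico (0:ℝ) 1 := Set.inter_subset_right
    have hpre : S ⁻¹' A = {x | Int.fract ((Qm:ℝ)*(R:ℝ)*x) ∈ A'} := by
      ext x
      simp only [Set.mem_preimage, hSdef, Set.mem_setOf_eq, hA'def, Set.mem_inter_iff,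
        Set.mem_Ico]
      exact (and_iff_left ⟨Int.fract_nonneg _, Int.fract_lt_one _⟩).symm
    set B := {x : ℝ | Int.fract ((Qm:ℝ)*(R:ℝ)*x) ∈ A'} with hBdef
    have hBm : MeasurableSet B := (measurable_id.const_mul _).fract hA'm
    have hFB : volume.withDensity (fun x => ENNReal.ofReal (f x)) (S ⁻¹' A)
        = ∫⁻ x in B, ENNReal.ofReal (f x) := by
      rw [hpre, withDensity_apply _ hBm]
    have hExact : ∫⁻ x in B, ENNReal.ofReal (h x) = cE * volume A' :=
      step_exact Qm R hQm hRpos a ha_nonneg A' hA'sub hA'm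
    have hvolA' : volume A' ≤ 1 := by
      calc volume A' ≤ volume (Set.Ico (0:ℝ) 1) := measure_mono hA'sub
        _ = 1 := by simp [Real.volume_Ico]
    have hvolA'_ne : volume A' ≠ ⊤ := (lt_of_le_of_lt hvolA' ENNReal.one_lt_top).ne
    have hUne : ∫⁻ x in B, ENNReal.ofReal (f x) ≠ ⊤ := by
      have hle : ∫⁻ x in B, ENNReal.ofReal (f x) ≤ 1 :=
        le_trans (setLIntegral_le_lintegral _ _) (le_of_eq htot)
      exact (lt_of_le_of_lt hle ENNReal.one_lt_top).ne
    have hVne : ∫⁻ x in B, ENNReal.ofReal (h x) ≠ ⊤ := by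
      rw [hExact]; exact ENNReal.mul_ne_top hcE_ne hvolA'_ne
    have hfirst : |(∫⁻ x in B, ENNReal.ofReal (f x)).toReal
        - (∫⁻ x in B, ENNReal.ofReal (h x)).toReal| ≤ Δ.toReal :=
      lintegral_abs_bound hf_meas hh_meas hf_nonneg hh_nonneg hBm hUne hVne hΔ_ne
    have hvtoReal : (volume A').toReal ≤ 1 := by
      have := ENNReal.toReal_mono ENNReal.one_ne_top hvolA'
      simpa using this
    have hsecond : |(∫⁻ x in B, ENNReal.ofReal (h x)).toReal - (volume A').toReal|
        ≤ Δ.toReal := by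
      rw [hExact, ENNReal.toReal_mul]
      have heq : cE.toReal * (volume A').toReal - (volume A').toReal
          = (cE.toReal - 1) * (volume A').toReal := by ring
      rw [heq, abs_mul, abs_of_nonneg (ENNReal.toReal_nonneg (a := volume A'))]
      calc |cE.toReal - 1| * (volume A').toReal ≤ |cE.toReal - 1| * 1 :=
          mul_le_mul_of_nonneg_left hvtoReal (abs_nonneg _)
        _ = |cE.toReal - 1| := mul_one _
        _ ≤ Δ.toReal := hc1
    rw [hFB]
    have htri := abs_sub_le (∫⁻ x in B, ENNReal.ofReal (f x)).toReal
      (∫⁻ x in B, ENNReal.ofReal (h x)).toReal (volume A').toReal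
    linarith [hfirst, hsecond, hΔ_toReal]
  have hTV_le : dTV (Measure.map (fun ω => (T q)^[n] (X ω)) ℙ)
      (volume.restrict (Set.Ico (0:ℝ) 1)) ≤ 4*ε₁ :=
    Real.iSup_le (fun A => hbound A.1 A.2) (by positivity)
  have hTV_nonneg : 0 ≤ dTV (Measure.map (fun ω => (T q)^[n] (X ω)) ℙ)
      (volume.restrict (Set.Ico (0:ℝ) 1)) :=
    Real.iSup_nonneg (fun A => abs_nonneg _)
  rw [Real.dist_0_eq_abs, abs_of_nonneg hTV_nonneg]
  have : 4*ε₁ < ε := by rw [hε₁def]; linarith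
  linarith
end

section
/- Let q ≥ 2 be an integer and let X be a random variable with values in [0,1) whose law has density f concentrated on (0,1), where f is differentiable on (0,1) with ‖f′‖_∞ = sup_{(0,1)} |f′| < ∞. Then for every n ≥ 1, the law P_n of T^n(X) satisfies d_TV(P_n, μ) ≤ (1/6) q^{−2n} Σ_{j=0}^{q^n−1} ‖f′_{n,j}‖_∞ ≤ (1/6) q^{−n} ‖f′‖_∞; in particular P_n converges to μ exponentially fast in total variation. -/
open MeasureTheory Set

lemma T_iterate (q : ℕ) : ∀ (n : ℕ) (x : ℝ),
    (T q)^[n] (Int.fract x) = Int.fract ((q:ℝ)^n * x) := by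
  intro n
  induction n with
  | zero => intro x; simp [Int.fract_fract]
  | succ n ih =>
    intro x
    rw [Function.iterate_succ_apply]
    have h1 : T q (Int.fract x) = Int.fract ((q:ℝ) * x) := by
      unfold T
      have : (q:ℝ) * Int.fract x = (q:ℝ) * x - ((q * ⌊x⌋ : ℤ) : ℝ) := by
        rw [Int.fract]; push_cast; ring
      rw [this, Int.fract_sub_intCast]
    rw [h1, ih ((q:ℝ) * x)]
    congr 1; ring
lemma max_abs_pos (a : ℝ) : max a 0 = (a + |a|)/2 := by
  rcases le_total 0 a with h|h
  · rw [max_eq_left h, abs_of_nonneg h]; ring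
  · rw [max_eq_right h, abs_of_nonpos h]; ring

lemma max_abs_neg (a : ℝ) : max (-a) 0 = (|a| - a)/2 := by
  rcases le_total 0 a with h|h
  · rw [max_eq_right (neg_nonpos.2 h), abs_of_nonneg h]; ring
  · rw [max_eq_left (neg_nonneg.2 h), abs_of_nonpos h]; ring

lemma half_trick {B : Set ℝ} (hB : MeasurableSet B) (u : ℝ → ℝ)
    (hu : IntegrableOn u (Ioo (0:ℝ) 1))
    (h0 : ∫ x in Ioo (0:ℝ) 1, u x = 0) :
    |∫ x in B, u x ∂(volume.restrict (Ioo (0:ℝ) 1))|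
      ≤ (1/2) * ∫ x in Ioo (0:ℝ) 1, |u x| := by
  set μ := volume.restrict (Ioo (0:ℝ) 1) with hμ
  have hu' : Integrable u μ := hu
  have habs : Integrable (fun x => |u x|) μ := hu'.abs
  have epos : (fun x => max (u x) 0) = fun x => (u x + |u x|)/2 := by
    funext x; exact max_abs_pos (u x)
  have eneg : (fun x => max (-u x) 0) = fun x => (|u x| - u x)/2 := by
    funext x; exact max_abs_neg (u x)
  have hpos : Integrable (fun x => max (u x) 0) μ := by
    rw [epos]; exact (hu'.add habs).div_const 2
  have hneg : Integrable (fun x => max (-u x) 0) μ := by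
    rw [eneg]; exact (habs.sub hu').div_const 2
  have hposval : ∫ x, max (u x) 0 ∂μ = (1/2) * ∫ x in Ioo (0:ℝ) 1, |u x| := by
    rw [epos, integral_div, integral_add hu' habs, hμ]
    rw [show ∫ x, u x ∂(volume.restrict (Ioo (0:ℝ) 1)) = 0 from h0]
    ring
  have hnegval : ∫ x, max (-u x) 0 ∂μ = (1/2) * ∫ x in Ioo (0:ℝ) 1, |u x| := by
    rw [eneg, integral_div, integral_sub habs hu', hμ]
    rw [show ∫ x, u x ∂(volume.restrict (Ioo (0:ℝ) 1)) = 0 from h0]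
    ring
  rw [abs_le]
  constructor
  · have h1 : ∫ x in B, -u x ∂μ = -∫ x in B, u x ∂μ := by
      simpa using integral_neg (μ := μ.restrict B) u
    have h2 : ∫ x in B, -u x ∂μ ≤ ∫ x in B, max (-u x) 0 ∂μ := by
      apply setIntegral_mono_on (hu'.neg.restrict) (hneg.restrict) hB
      intro x _; exact le_max_left _ _
    have h3 : ∫ x in B, max (-u x) 0 ∂μ ≤ ∫ x, max (-u x) 0 ∂μ :=
      setIntegral_le_integral hneg (Filter.Eventually.of_forall (fun x => le_max_right _ _))
    linarith
  · have h2 : ∫ x in B, u x ∂μ ≤ ∫ x in B, max (u x) 0 ∂μ := by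
      apply setIntegral_mono_on (hu'.restrict) (hpos.restrict) hB
      intro x _; exact le_max_left _ _
    have h3 : ∫ x in B, max (u x) 0 ∂μ ≤ ∫ x, max (u x) 0 ∂μ :=
      setIntegral_le_integral hpos (Filter.Eventually.of_forall (fun x => le_max_right _ _))
    linarith
lemma abs_integral_one : ∀ y ∈ Icc (0:ℝ) 1,
    ∫ s in Ioo (0:ℝ) 1, |y - s| = y^2/2 + (1-y)^2/2 := by
  intro y hy
  rw [← integral_Ioc_eq_integral_Ioo, ← intervalIntegral.integral_of_le (by norm_num : (0:ℝ) ≤ 1)]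
  rw [← intervalIntegral.integral_add_adjacent_intervals
    (a := 0) (b := y) (c := 1)
    (by apply Continuous.intervalIntegrable; fun_prop)
    (by apply Continuous.intervalIntegrable; fun_prop)]
  have h1 : ∫ s in (0:ℝ)..y, |y - s| = ∫ s in (0:ℝ)..y, (y - s) := by
    apply intervalIntegral.integral_congr
    intro s hs
    rw [uIcc_of_le hy.1] at hs
    simp only
    exact abs_of_nonneg (by linarith [hs.2])
  have h2 : ∫ s in y..(1:ℝ), |y - s| = ∫ s in y..(1:ℝ), (s - y) := by
    apply intervalIntegral.integral_congr
    intro s hs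
    rw [uIcc_of_le hy.2] at hs
    simp only
    rw [abs_sub_comm]
    exact abs_of_nonneg (by linarith [hs.1])
  rw [h1, h2]
  rw [_root_.intervalIntegral.integral_sub (by apply Continuous.intervalIntegrable; fun_prop)
      (by apply Continuous.intervalIntegrable; fun_prop),
    _root_.intervalIntegral.integral_sub (by apply Continuous.intervalIntegrable; fun_prop)
      (by apply Continuous.intervalIntegrable; fun_prop)]
  simp [_root_.intervalIntegral.integral_const, integral_id]
  ring

lemma weight_integral : ∫ y in Ioo (0:ℝ) 1, (y^2/2 + (1-y)^2/2) = 1/3 := by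
  rw [← integral_Ioc_eq_integral_Ioo, ← intervalIntegral.integral_of_le (by norm_num : (0:ℝ) ≤ 1)]
  have : ∀ y : ℝ, y^2/2 + (1-y)^2/2 = y^2 - y + 1/2 := by intro y; ring
  simp only [this]
  rw [_root_.intervalIntegral.integral_add (by apply Continuous.intervalIntegrable; fun_prop)
      (by apply Continuous.intervalIntegrable; fun_prop),
    _root_.intervalIntegral.integral_sub (by apply Continuous.intervalIntegrable; fun_prop)
      (by apply Continuous.intervalIntegrable; fun_prop)]
  simp [integral_pow, integral_id]
  norm_num

lemma mean_dev_bound (F F' : ℝ → ℝ) (L : ℝ) (hL0 : 0 ≤ L)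
    (hmeas : Measurable F) (hint : IntegrableOn F (Ioo (0:ℝ) 1))
    (hF : ∀ t ∈ Ioo (0:ℝ) 1, HasDerivAt F (F' t) t)
    (hLb : ∀ t ∈ Ioo (0:ℝ) 1, |F' t| ≤ L) :
    ∫ y in Ioo (0:ℝ) 1, |F y - ∫ s in Ioo (0:ℝ) 1, F s| ≤ L/3 := by
  set m := ∫ s in Ioo (0:ℝ) 1, F s with hm
  have hvol : (volume (Ioo (0:ℝ) 1)) = 1 := by simp
  have hlip : ∀ y ∈ Ioo (0:ℝ) 1, ∀ s ∈ Ioo (0:ℝ) 1, |F y - F s| ≤ L * |y - s| := by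
    intro y hy s hs
    have := Convex.norm_image_sub_le_of_norm_hasDerivWithin_le
      (f := F) (f' := F') (s := Ioo (0:ℝ) 1)
      (fun t ht => (hF t ht).hasDerivWithinAt) (fun t ht => hLb t ht)
      (convex_Ioo 0 1) hs hy
    simpa [Real.norm_eq_abs] using this
  -- pointwise bound
  have hpt : ∀ y ∈ Ioo (0:ℝ) 1, |F y - m| ≤ L * (y^2/2 + (1-y)^2/2) := by
    intro y hy
    have h1 : F y - m = ∫ s in Ioo (0:ℝ) 1, (F y - F s) := by
      rw [integral_sub (integrableOn_const (μ := volume) (s := Ioo (0:ℝ) 1) (C := F y) (by simp)) hint]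
      rw [setIntegral_const]
      simp [hvol]; exact hm
    rw [h1]
    have h2 : |∫ s in Ioo (0:ℝ) 1, (F y - F s)| ≤ ∫ s in Ioo (0:ℝ) 1, |F y - F s| := by
      simpa [Real.norm_eq_abs] using
        norm_integral_le_integral_norm (μ := volume.restrict (Ioo (0:ℝ) 1)) (fun s => F y - F s)
    refine h2.trans ?_
    have h3 : ∫ s in Ioo (0:ℝ) 1, |F y - F s| ≤ ∫ s in Ioo (0:ℝ) 1, L * |y - s| := by
      apply setIntegral_mono_on
      · exact ((integrableOn_const (by simp)).sub hint).abs
      · apply IntegrableOn.mono_set (t := Icc (0:ℝ) 1) _ Ioo_subset_Icc_self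
        exact (Continuous.integrableOn_Icc (by fun_prop))
      · exact measurableSet_Ioo
      · intro s hs; exact hlip y hy s hs
    refine h3.trans ?_
    rw [integral_const_mul, abs_integral_one y (Ioo_subset_Icc_self hy)]
  -- integrate
  have h4 : ∫ y in Ioo (0:ℝ) 1, |F y - m| ≤ ∫ y in Ioo (0:ℝ) 1, L * (y^2/2 + (1-y)^2/2) := by
    apply setIntegral_mono_on
    · exact (hint.sub (integrableOn_const (by simp))).abs
    · apply IntegrableOn.mono_set (t := Icc (0:ℝ) 1) _ Ioo_subset_Icc_self
      exact (Continuous.integrableOn_Icc (by fun_prop))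
    · exact measurableSet_Ioo
    · exact hpt
  refine h4.trans ?_
  rw [integral_const_mul, weight_integral]
  linarith [mul_le_mul_of_nonneg_left (le_refl ((1:ℝ)/3)) hL0]
lemma map_affine (c : ℝ) (hc : 0 < c) (j : ℝ) :
    Measure.map (fun x => c * x - j) (volume : Measure ℝ)
      = ENNReal.ofReal (1/c) • volume := by
  have h1 : (fun x : ℝ => c * x - j) = (fun y : ℝ => y + (-j)) ∘ (fun x => c * x) := by
    funext x; simp [sub_eq_add_neg]
  rw [h1, ← Measure.map_map (by fun_prop) (by fun_prop)]
  rw [show (fun x : ℝ => c * x) = (c * ·) from rfl, Real.map_volume_mul_left (ne_of_gt hc)]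
  rw [Measure.map_smul]
  rw [map_add_right_eq_self volume (-j)]
  congr 1
  rw [abs_inv, abs_of_pos hc, one_div]

lemma affine_cov (g : ℝ → ℝ) (hg : Measurable g) (c : ℝ) (hc : 0 < c) (j : ℝ)
    (B : Set ℝ) (hB : MeasurableSet B) :
    ∫ x in (fun x => c * x - j) ⁻¹' B, g x = (1/c) * ∫ y in B, g ((y + j)/c) := by
  have hφ : Measurable (fun x : ℝ => c * x - j) := by fun_prop
  have key : ∫ y in B, g ((y + j)/c) ∂(Measure.map (fun x => c * x - j) volume)
      = ∫ x in (fun x => c * x - j) ⁻¹' B, g ((c * x - j + j)/c) := by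
    exact setIntegral_map hB (by fun_prop : Measurable fun y => g ((y + j)/c)).aestronglyMeasurable hφ.aemeasurable
  have hsimp : ∀ x : ℝ, (c * x - j + j)/c = x := by
    intro x; field_simp; ring
  simp only [hsimp] at key
  rw [← key, map_affine c hc j, Measure.restrict_smul, integral_smul_measure,
    ENNReal.toReal_ofReal (by positivity)]
  simp [smul_eq_mul]
lemma fract_partition (N : ℕ) (hN : 0 < N) (B : Set ℝ) (hB : B ⊆ Ico (0:ℝ) 1) :
    (fun x => Int.fract ((N:ℝ) * x)) ⁻¹' B ∩ Ico (0:ℝ) 1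
      = ⋃ j ∈ Finset.range N, (fun x => (N:ℝ) * x - j) ⁻¹' B := by
  have hNR : (0:ℝ) < N := by exact_mod_cast hN
  ext x
  simp only [mem_inter_iff, mem_preimage, mem_iUnion, Finset.mem_range, exists_prop, mem_Ico]
  constructor
  · rintro ⟨hfr, hx0, hx1⟩
    have hN0 : (0:ℝ) ≤ (N:ℝ) * x := mul_nonneg (Nat.cast_nonneg N) hx0
    have hN1 : (N:ℝ) * x < N := by nlinarith
    set j : ℤ := ⌊(N:ℝ) * x⌋ with hj
    have hj0 : 0 ≤ j := Int.floor_nonneg.2 hN0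
    have hjN : j < (N:ℤ) := by
      rw [hj, Int.floor_lt]; push_cast; exact hN1
    refine ⟨j.toNat, by omega, ?_⟩
    have hcast : ((j.toNat : ℕ) : ℝ) = (j : ℝ) := by
      exact_mod_cast Int.toNat_of_nonneg hj0
    rw [hcast]
    have : (N:ℝ) * x - (j:ℝ) = Int.fract ((N:ℝ) * x) := by rw [Int.fract]
    rw [this]; exact hfr
  · rintro ⟨j, hjN, hmem⟩
    have h01 := hB hmem
    have hx0 : (0:ℝ) ≤ (N:ℝ) * x - j := h01.1
    have hx1 : (N:ℝ) * x - j < 1 := h01.2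
    have hjr0 : (0:ℝ) ≤ (j:ℝ) := by positivity
    have hjr1 : (j:ℝ) + 1 ≤ (N:ℝ) := by exact_mod_cast Nat.succ_le_of_lt hjN
    have hfloor : ⌊(N:ℝ) * x⌋ = (j:ℤ) := by
      rw [Int.floor_eq_iff]
      constructor
      · push_cast; linarith
      · push_cast; linarith
    have hfr : Int.fract ((N:ℝ) * x) = (N:ℝ) * x - j := by
      rw [Int.fract, hfloor]; push_cast; ring
    refine ⟨by rw [hfr]; exact hmem, ?_, ?_⟩
    · nlinarith
    · nlinarith

lemma fract_partition_disjoint (N : ℕ) (B : Set ℝ) (hB : B ⊆ Ico (0:ℝ) 1) :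
    ∀ j ∈ Finset.range N, ∀ k ∈ Finset.range N, j ≠ k →
      Disjoint ((fun x => (N:ℝ) * x - j) ⁻¹' B) ((fun x => (N:ℝ) * x - k) ⁻¹' B) := by
  intro j _ k _ hjk
  rw [Set.disjoint_left]
  intro x hxj hxk
  have h1 := hB hxj
  have h2 := hB hxk
  have a1 : (0:ℝ) ≤ (N:ℝ)*x - j := h1.1
  have a2 : (N:ℝ)*x - j < 1 := h1.2
  have a3 : (0:ℝ) ≤ (N:ℝ)*x - k := h2.1
  have a4 : (N:ℝ)*x - k < 1 := h2.2
  have hjk1 : (j:ℝ) < (k:ℝ) + 1 := by linarith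
  have hjk2 : (k:ℝ) < (j:ℝ) + 1 := by linarith
  have b1 : j < k + 1 := by exact_mod_cast hjk1
  have b2 : k < j + 1 := by exact_mod_cast hjk2
  omega
lemma master (f : ℝ → ℝ) (hf_meas : Measurable f)
    (hf_supp : ∀ x, x ∉ Set.Ioo (0:ℝ) 1 → f x = 0)
    (hf_int : Integrable f) (hf_nonneg : ∀ x, 0 ≤ f x)
    (N : ℕ) (hN : 0 < N) (B : Set ℝ) (hBm : MeasurableSet B) (hBsub : B ⊆ Ico (0:ℝ) 1) :
    ((volume.withDensity fun x => ENNReal.ofReal (f x))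
        ((fun x => Int.fract ((N:ℝ) * x)) ⁻¹' B)).toReal
      = ∑ j ∈ Finset.range N, (1/(N:ℝ)) * ∫ y in B, f ((y + j)/(N:ℝ)) := by
  have hNR : (0:ℝ) < N := by exact_mod_cast hN
  set S := (fun x => Int.fract ((N:ℝ) * x)) ⁻¹' B with hS
  have hSm : MeasurableSet S := (measurable_fract.comp (measurable_const_mul (N:ℝ))) hBm
  rw [withDensity_apply _ hSm]
  have hind : (fun x => ENNReal.ofReal (f x))
      = (Ioo (0:ℝ) 1).indicator (fun x => ENNReal.ofReal (f x)) := by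
    funext x
    by_cases hx : x ∈ Ioo (0:ℝ) 1
    · simp [hx]
    · simp [hx, hf_supp x hx]
  rw [hind, lintegral_indicator measurableSet_Ioo, Measure.restrict_restrict measurableSet_Ioo]
  rw [← ofReal_integral_eq_lintegral_ofReal (hf_int.integrableOn)
    (Filter.Eventually.of_forall hf_nonneg)]
  rw [ENNReal.toReal_ofReal (setIntegral_nonneg (measurableSet_Ioo.inter hSm)
    (fun x _ => hf_nonneg x))]
  have hae : (Ioo (0:ℝ) 1 ∩ S : Set ℝ) =ᵐ[volume] (S ∩ Ico (0:ℝ) 1 : Set ℝ) := by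
    exact (Filter.EventuallyEq.inter Ioo_ae_eq_Ico (Filter.EventuallyEq.refl _ _)).trans
      (Filter.EventuallyEq.of_eq (inter_comm _ _))
  rw [setIntegral_congr_set hae, fract_partition N hN B hBsub]
  rw [integral_biUnion_finset (Finset.range N)
    (fun j _ => (by fun_prop : Measurable fun x : ℝ => (N:ℝ) * x - j) hBm)
    (fract_partition_disjoint N B hBsub)
    (fun j _ => hf_int.integrableOn)]
  exact Finset.sum_congr rfl fun j _ => affine_cov f hf_meas (N:ℝ) hNR j B hBm

theorem stmt14
    {Ω : Type*} [MeasurableSpace Ω] (ℙ : Measure Ω) [IsProbabilityMeasure ℙ]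
    (q : ℕ) (hq : 2 ≤ q)
    (f f' : ℝ → ℝ) (hf_meas : Measurable f) (hf_nonneg : ∀ x, 0 ≤ f x)
    (hf_supp : ∀ x, x ∉ Set.Ioo (0:ℝ) 1 → f x = 0)
    (hderiv : ∀ x ∈ Set.Ioo (0:ℝ) 1, HasDerivAt f (f' x) x)
    -- `‖f′‖_∞ < ∞`
    (hbdd : BddAbove ((fun x => |f' x|) '' Set.Ioo (0:ℝ) 1))
    (X : Ω → ℝ) (hX : Measurable X) (hXrange : ∀ ω, X ω ∈ Set.Ico (0:ℝ) 1)
    (hlaw : Measure.map X ℙ = volume.withDensity (fun x => ENNReal.ofReal (f x)))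
    (n : ℕ) (hn : 1 ≤ n) :
    dTV (Measure.map (fun ω => (T q)^[n] (X ω)) ℙ) (volume.restrict (Set.Ico (0:ℝ) 1))
      ≤ (1 / 6) * (q : ℝ) ^ (-(2 * n : ℤ)) *
          ∑ j ∈ Finset.range (q ^ n),
            sSup ((fun y => |f' y|) ''
              Set.Ioo ((j : ℝ) / (q : ℝ) ^ n) (((j : ℝ) + 1) / (q : ℝ) ^ n))
    ∧ (1 / 6) * (q : ℝ) ^ (-(2 * n : ℤ)) *
          ∑ j ∈ Finset.range (q ^ n),
            sSup ((fun y => |f' y|) ''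
              Set.Ioo ((j : ℝ) / (q : ℝ) ^ n) (((j : ℝ) + 1) / (q : ℝ) ^ n))
        ≤ (1 / 6) * (q : ℝ) ^ (-(n : ℤ)) * sSup ((fun y => |f' y|) '' Set.Ioo (0:ℝ) 1) := by
  -- basic setup
  have hqR : (2:ℝ) ≤ (q:ℝ) := by exact_mod_cast hq
  set N : ℕ := q ^ n with hNdef
  have hN : 0 < N := pow_pos (by omega) n
  have hNR : (0:ℝ) < (N:ℝ) := by exact_mod_cast hN
  have hcq : ((N:ℕ):ℝ) = (q:ℝ)^n := by rw [hNdef]; push_cast; ring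
  -- constants
  have hz2 : (q:ℝ) ^ (-(2 * n : ℤ)) = 1/((N:ℝ))^2 := by
    have h1 : (-(2 * n : ℤ)) = -((2*n : ℕ) : ℤ) := by push_cast; ring
    rw [h1, zpow_neg, zpow_natCast, mul_comm 2 n, pow_mul, ← hcq, one_div]
  have hz1 : (q:ℝ) ^ (-(n : ℤ)) = 1/(N:ℝ) := by
    rw [zpow_neg, zpow_natCast, ← hcq, one_div]
  have hIne : ∀ j : ℕ, ((j:ℝ)/(N:ℝ)) < (((j:ℝ)+1)/(N:ℝ)) := by
    intro j; gcongr <;> linarith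
  have hIsub : ∀ j : ℕ, j < N → Ioo ((j:ℝ)/(N:ℝ)) (((j:ℝ)+1)/(N:ℝ)) ⊆ Ioo (0:ℝ) 1 := by
    intro j hj
    apply Ioo_subset_Ioo
    · positivity
    · rw [div_le_one hNR]; exact_mod_cast hj
  -- sups
  set Mj : ℕ → ℝ := fun j => sSup ((fun y => |f' y|) '' Ioo ((j:ℝ)/(N:ℝ)) (((j:ℝ)+1)/(N:ℝ))) with hMjdef
  have hMj_bdd : ∀ j, j < N → BddAbove ((fun y => |f' y|) '' Ioo ((j:ℝ)/(N:ℝ)) (((j:ℝ)+1)/(N:ℝ))) :=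
    fun j hj => hbdd.mono (image_mono (hIsub j hj))
  have hfb : ∀ j, j < N → ∀ z ∈ Ioo ((j:ℝ)/(N:ℝ)) (((j:ℝ)+1)/(N:ℝ)), |f' z| ≤ Mj j :=
    fun j hj z hz => le_csSup (hMj_bdd j hj) ⟨z, hz, rfl⟩
  have hMj_nonneg : ∀ j, j < N → 0 ≤ Mj j := by
    intro j hj
    obtain ⟨z, hz⟩ := nonempty_Ioo.2 (hIne j)
    exact le_trans (abs_nonneg (f' z)) (hfb j hj z hz)
  -- probability density facts
  have hprob : IsProbabilityMeasure (volume.withDensity fun x => ENNReal.ofReal (f x)) := by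
    rw [← hlaw]; exact Measure.isProbabilityMeasure_map hX.aemeasurable
  have hlint : ∫⁻ x, ENNReal.ofReal (f x) = 1 := by
    have h1 := hprob.measure_univ
    rwa [withDensity_apply _ MeasurableSet.univ, Measure.restrict_univ] at h1
  have hf_int : Integrable f := by
    refine ⟨hf_meas.aestronglyMeasurable, ?_⟩
    rw [hasFiniteIntegral_iff_ofReal (Filter.Eventually.of_forall hf_nonneg), hlint]
    exact ENNReal.one_lt_top
  -- the rescaled pieces
  have hFint : ∀ j : ℕ, Integrable (fun y : ℝ => f ((y + (j:ℝ))/(N:ℝ))) := by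
    intro j
    have hmap : Measure.map (fun y : ℝ => (1/(N:ℝ)) * y - (-((j:ℝ)/(N:ℝ)))) volume
        = ENNReal.ofReal (1/(1/(N:ℝ))) • volume := map_affine (1/(N:ℝ)) (by positivity) _
    have heq : (fun y : ℝ => (1/(N:ℝ)) * y - (-((j:ℝ)/(N:ℝ)))) = fun y : ℝ => (y + (j:ℝ))/(N:ℝ) := by
      funext y; field_simp; ring
    rw [heq, one_div_one_div] at hmap
    have h1 : Integrable f (Measure.map (fun y : ℝ => (y + (j:ℝ))/(N:ℝ)) volume) := by
      rw [hmap]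
      exact hf_int.smul_measure ENNReal.ofReal_ne_top
    have h2 := (integrable_map_measure hf_meas.aestronglyMeasurable (by fun_prop)).mp h1
    exact h2
  -- law of the iterate
  have hg_meas : Measurable fun x : ℝ => Int.fract ((N:ℝ)*x) :=
    measurable_fract.comp (measurable_const_mul _)
  have hcomp : (fun ω => (T q)^[n] (X ω)) = (fun x : ℝ => Int.fract ((N:ℝ) * x)) ∘ X := by
    funext ω
    have h1 : Int.fract (X ω) = X ω := Int.fract_eq_self.2 ⟨(hXrange ω).1, (hXrange ω).2⟩
    show (T q)^[n] (X ω) = Int.fract ((N:ℝ) * X ω)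
    calc (T q)^[n] (X ω) = (T q)^[n] (Int.fract (X ω)) := by rw [h1]
      _ = Int.fract ((q:ℝ)^n * X ω) := T_iterate q n (X ω)
      _ = Int.fract ((N:ℝ) * X ω) := by rw [hcq]
  have hmeasmap : Measure.map (fun ω => (T q)^[n] (X ω)) ℙ
      = Measure.map (fun x : ℝ => Int.fract ((N:ℝ)*x))
          (volume.withDensity fun x => ENNReal.ofReal (f x)) := by
    rw [hcomp, ← Measure.map_map hg_meas hX, hlaw]
  have hνA : ∀ A : Set ℝ, MeasurableSet A →
      ((Measure.map (fun ω => (T q)^[n] (X ω)) ℙ) A).toReal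
        = ∑ j ∈ Finset.range N, (1/(N:ℝ)) * ∫ y in A ∩ Ico (0:ℝ) 1, f ((y + j)/(N:ℝ)) := by
    intro A hA
    rw [hmeasmap, Measure.map_apply hg_meas hA]
    have hpre : (fun x : ℝ => Int.fract ((N:ℝ)*x)) ⁻¹' A
        = (fun x : ℝ => Int.fract ((N:ℝ)*x)) ⁻¹' (A ∩ Ico 0 1) := by
      ext x
      simp only [mem_preimage, mem_inter_iff, mem_Ico]
      exact ⟨fun h => ⟨h, Int.fract_nonneg _, Int.fract_lt_one _⟩, fun h => h.1⟩
    rw [hpre]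
    exact master f hf_meas hf_supp hf_int hf_nonneg N hN _
      (hA.inter measurableSet_Ico) inter_subset_right
  -- total mass
  have htot : ∑ j ∈ Finset.range N, (1/(N:ℝ)) * ∫ y in Ico (0:ℝ) 1, f ((y + j)/(N:ℝ)) = 1 := by
    have huniv : (fun x : ℝ => Int.fract ((N:ℝ)*x)) ⁻¹' (Ico (0:ℝ) 1) = univ :=
      eq_univ_of_forall fun x => ⟨Int.fract_nonneg _, Int.fract_lt_one _⟩
    have hm := master f hf_meas hf_supp hf_int hf_nonneg N hN (Ico 0 1)
      measurableSet_Ico (subset_refl _)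
    rw [huniv, measure_univ] at hm
    simpa using hm.symm
  set cj : ℕ → ℝ := fun j => ∫ s in Ioo (0:ℝ) 1, f ((s + (j:ℝ))/(N:ℝ)) with hcjdef
  have hcj_eq : ∀ j : ℕ, ∫ y in Ico (0:ℝ) 1, f ((y + (j:ℝ))/(N:ℝ)) = cj j :=
    fun j => (setIntegral_congr_set Ioo_ae_eq_Ico).symm
  have htot' : ∑ j ∈ Finset.range N, (1/(N:ℝ)) * cj j = 1 := by
    calc ∑ j ∈ Finset.range N, (1/(N:ℝ)) * cj j
        = ∑ j ∈ Finset.range N, (1/(N:ℝ)) * ∫ y in Ico (0:ℝ) 1, f ((y + (j:ℝ))/(N:ℝ)) :=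
          Finset.sum_congr rfl fun j _ => by rw [hcj_eq j]
      _ = 1 := htot
  -- mean deviation bound
  have hmemI : ∀ j : ℕ, ∀ t ∈ Ioo (0:ℝ) 1,
      ((t + (j:ℝ))/(N:ℝ)) ∈ Ioo ((j:ℝ)/(N:ℝ)) (((j:ℝ)+1)/(N:ℝ)) := by
    intro j t ht
    have h1 : (j:ℝ) < t + (j:ℝ) := by linarith [ht.1]
    have h2 : t + (j:ℝ) < (j:ℝ) + 1 := by linarith [ht.2]
    exact ⟨by gcongr, by gcongr⟩
  have hdev : ∀ j, j < N → ∫ y in Ioo (0:ℝ) 1, |f ((y + (j:ℝ))/(N:ℝ)) - cj j| ≤ (Mj j / (N:ℝ))/3 := by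
    intro j hj
    have hF' : ∀ t ∈ Ioo (0:ℝ) 1, HasDerivAt (fun y : ℝ => f ((y + (j:ℝ))/(N:ℝ)))
        (f' ((t + (j:ℝ))/(N:ℝ)) * (1/(N:ℝ))) t := by
      intro t ht
      have hz : ((t + (j:ℝ))/(N:ℝ)) ∈ Ioo (0:ℝ) 1 := hIsub j hj (hmemI j t ht)
      have hinner : HasDerivAt (fun y : ℝ => (y + (j:ℝ))/(N:ℝ)) (1/(N:ℝ)) t := by
        simpa using ((hasDerivAt_id t).add_const (j:ℝ)).div_const (N:ℝ)
      exact (hderiv _ hz).comp t hinner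
    have hLb : ∀ t ∈ Ioo (0:ℝ) 1, |f' ((t + (j:ℝ))/(N:ℝ)) * (1/(N:ℝ))| ≤ Mj j / (N:ℝ) := by
      intro t ht
      rw [abs_mul, abs_of_pos (by positivity : (0:ℝ) < 1/(N:ℝ))]
      calc |f' ((t + (j:ℝ))/(N:ℝ))| * (1/(N:ℝ))
          ≤ Mj j * (1/(N:ℝ)) :=
            mul_le_mul_of_nonneg_right (hfb j hj _ (hmemI j t ht)) (by positivity)
        _ = Mj j / (N:ℝ) := by ring
    have hmd := mean_dev_bound (fun y : ℝ => f ((y + (j:ℝ))/(N:ℝ)))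
      (fun y : ℝ => f' ((y + (j:ℝ))/(N:ℝ)) * (1/(N:ℝ)))
      (Mj j / (N:ℝ)) (div_nonneg (hMj_nonneg j hj) hNR.le) (by fun_prop)
      ((hFint j).integrableOn) hF' hLb
    simpa using hmd
  -- the per-set bound
  have key : ∀ A : Set ℝ, MeasurableSet A →
      |((Measure.map (fun ω => (T q)^[n] (X ω)) ℙ) A).toReal
        - ((volume.restrict (Ico (0:ℝ) 1)) A).toReal|
      ≤ (1/6) * (1/(N:ℝ)^2) * ∑ j ∈ Finset.range N, Mj j := by
    intro A hA
    set B := A ∩ Ico (0:ℝ) 1 with hBdef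
    have hBm : MeasurableSet B := hA.inter measurableSet_Ico
    have hBsub : B ⊆ Ico (0:ℝ) 1 := inter_subset_right
    set u : ℝ → ℝ := fun y => (∑ j ∈ Finset.range N, (1/(N:ℝ)) * f ((y + (j:ℝ))/(N:ℝ))) - 1
      with hudef
    have hsum_int : Integrable (fun y : ℝ => ∑ j ∈ Finset.range N, (1/(N:ℝ)) * f ((y + (j:ℝ))/(N:ℝ))) :=
      integrable_finset_sum _ (fun j _ => (hFint j).const_mul _)
    have hu_int : IntegrableOn u (Ioo (0:ℝ) 1) := by
      apply Integrable.sub hsum_int.integrableOn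
      exact integrableOn_const (by simp)
    -- ∫ u over Ioo 0 1 is zero
    have h0 : ∫ y in Ioo (0:ℝ) 1, u y = 0 := by
      rw [hudef]
      rw [integral_sub hsum_int.integrableOn (integrableOn_const (by simp))]
      rw [integral_finset_sum _ (fun j _ => ((hFint j).const_mul _).integrableOn)]
      have hterm : ∀ j ∈ Finset.range N, ∫ y in Ioo (0:ℝ) 1, (1/(N:ℝ)) * f ((y + (j:ℝ))/(N:ℝ))
          = (1/(N:ℝ)) * cj j := by
        intro j _
        rw [integral_const_mul]
      rw [Finset.sum_congr rfl hterm, htot']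
      simp
    -- the difference as an integral of u over B
    have hBae : (B ∩ Ioo (0:ℝ) 1 : Set ℝ) =ᵐ[volume] (B : Set ℝ) := by
      have ha1 : (B ∩ Ioo (0:ℝ) 1 : Set ℝ) = (A ∩ Ioo (0:ℝ) 1 : Set ℝ) := by
        rw [hBdef, inter_assoc]
        congr 1
        rw [inter_eq_right.2 Ioo_subset_Ico_self]
      rw [ha1, hBdef]
      exact Filter.EventuallyEq.inter (Filter.EventuallyEq.refl _ _) Ioo_ae_eq_Ico
    have hBfin : volume B < ⊤ :=
      lt_of_le_of_lt (measure_mono hBsub) (by simp)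
    have hdiff : ((Measure.map (fun ω => (T q)^[n] (X ω)) ℙ) A).toReal
        - ((volume.restrict (Ico (0:ℝ) 1)) A).toReal
        = ∫ y in B, u y ∂(volume.restrict (Ioo (0:ℝ) 1)) := by
      have e1 : ∫ y in B, u y ∂(volume.restrict (Ioo (0:ℝ) 1))
          = ∫ y in B ∩ Ioo (0:ℝ) 1, u y := by
        rw [Measure.restrict_restrict hBm]
      have e2 : ∫ y in B ∩ Ioo (0:ℝ) 1, u y = ∫ y in B, u y := setIntegral_congr_set hBae
      have e3 : ∫ y in B, u y
          = (∑ j ∈ Finset.range N, (1/(N:ℝ)) * ∫ y in B, f ((y + (j:ℝ))/(N:ℝ)))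
            - (volume B).toReal := by
        rw [hudef]
        rw [integral_sub hsum_int.integrableOn
          (integrableOn_const hBfin.ne)]
        rw [integral_finset_sum _ (fun j _ => ((hFint j).const_mul _).integrableOn)]
        congr 1
        · exact Finset.sum_congr rfl fun j _ => integral_const_mul _ _
        · rw [setIntegral_const]; simp; rfl
      rw [e1, e2, e3, hνA A hA, Measure.restrict_apply hA]
    -- conclude via half_trick
    rw [hdiff]
    refine (half_trick hBm u hu_int h0).trans ?_
    -- pointwise triangle bound
    have hpt : ∀ y : ℝ, |u y| ≤ ∑ j ∈ Finset.range N, (1/(N:ℝ)) * |f ((y + (j:ℝ))/(N:ℝ)) - cj j| := by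
      intro y
      have h1 : u y = ∑ j ∈ Finset.range N, (1/(N:ℝ)) * (f ((y + (j:ℝ))/(N:ℝ)) - cj j) := by
        rw [hudef]
        simp only [mul_sub]
        rw [Finset.sum_sub_distrib, htot']
      rw [h1]
      refine (Finset.abs_sum_le_sum_abs _ _).trans ?_
      apply Finset.sum_le_sum
      intro j _
      rw [abs_mul, abs_of_pos (by positivity : (0:ℝ) < 1/(N:ℝ))]
    have hsub_int : ∀ j : ℕ, IntegrableOn
        (fun y => |f ((y + (j:ℝ))/(N:ℝ)) - cj j|) (Ioo (0:ℝ) 1) :=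
      fun j => ((hFint j).integrableOn.sub (integrableOn_const (by simp))).abs
    have hint_absum : IntegrableOn
        (fun y => ∑ j ∈ Finset.range N, (1/(N:ℝ)) * |f ((y + (j:ℝ))/(N:ℝ)) - cj j|)
        (Ioo (0:ℝ) 1) :=
      integrable_finset_sum _ (fun j _ => (hsub_int j).const_mul _)
    have h2 : ∫ y in Ioo (0:ℝ) 1, |u y|
        ≤ ∫ y in Ioo (0:ℝ) 1, ∑ j ∈ Finset.range N, (1/(N:ℝ)) * |f ((y + (j:ℝ))/(N:ℝ)) - cj j| :=
      setIntegral_mono_on hu_int.abs hint_absum measurableSet_Ioo (fun y _ => hpt y)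
    have h3 : ∫ y in Ioo (0:ℝ) 1, ∑ j ∈ Finset.range N, (1/(N:ℝ)) * |f ((y + (j:ℝ))/(N:ℝ)) - cj j|
        = ∑ j ∈ Finset.range N, (1/(N:ℝ)) * ∫ y in Ioo (0:ℝ) 1, |f ((y + (j:ℝ))/(N:ℝ)) - cj j| := by
      rw [integral_finset_sum _ (fun j _ => (hsub_int j).const_mul _)]
      exact Finset.sum_congr rfl fun j _ => integral_const_mul _ _
    have h4 : ∑ j ∈ Finset.range N, (1/(N:ℝ)) * ∫ y in Ioo (0:ℝ) 1, |f ((y + (j:ℝ))/(N:ℝ)) - cj j|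
        ≤ ∑ j ∈ Finset.range N, (1/(N:ℝ)) * ((Mj j / (N:ℝ))/3) := by
      apply Finset.sum_le_sum
      intro j hj
      exact mul_le_mul_of_nonneg_left (hdev j (Finset.mem_range.1 hj)) (by positivity)
    have h5 : (1/2 : ℝ) * ∫ y in Ioo (0:ℝ) 1, |u y|
        ≤ (1/2 : ℝ) * ∑ j ∈ Finset.range N, (1/(N:ℝ)) * ((Mj j / (N:ℝ))/3) := by
      apply mul_le_mul_of_nonneg_left _ (by norm_num)
      exact (h2.trans (le_of_eq h3)).trans h4
    refine h5.trans (le_of_eq ?_)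
    rw [Finset.mul_sum, Finset.mul_sum]
    apply Finset.sum_congr rfl
    intro j _
    ring
  -- final assembly
  have hsum_eq : ∑ j ∈ Finset.range N,
      sSup ((fun y => |f' y|) '' Ioo ((j:ℝ)/(q:ℝ)^n) (((j:ℝ)+1)/(q:ℝ)^n))
      = ∑ j ∈ Finset.range N, Mj j := by
    apply Finset.sum_congr rfl
    intro j _
    rw [hMjdef]
    rw [← hcq]
  haveI : Nonempty {A : Set ℝ // MeasurableSet A} := ⟨⟨∅, MeasurableSet.empty⟩⟩
  constructor
  · have hrhs : (1/6 : ℝ) * (q:ℝ)^(-(2*n:ℤ)) * ∑ j ∈ Finset.range N,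
        sSup ((fun y => |f' y|) '' Ioo ((j:ℝ)/(q:ℝ)^n) (((j:ℝ)+1)/(q:ℝ)^n))
        = (1/6) * (1/(N:ℝ)^2) * ∑ j ∈ Finset.range N, Mj j := by
      rw [hz2, hsum_eq]
    rw [hrhs]
    unfold dTV
    exact ciSup_le fun A => key A.1 A.2
  · have hMle : ∀ j ∈ Finset.range N, Mj j ≤ sSup ((fun y => |f' y|) '' Ioo (0:ℝ) 1) := by
      intro j hj
      exact csSup_le_csSup hbdd ((nonempty_Ioo.2 (hIne j)).image _)
        (image_mono (hIsub j (Finset.mem_range.1 hj)))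
    have hsum_le : ∑ j ∈ Finset.range N, Mj j ≤ (N:ℝ) * sSup ((fun y => |f' y|) '' Ioo (0:ℝ) 1) := by
      calc ∑ j ∈ Finset.range N, Mj j
          ≤ ∑ _j ∈ Finset.range N, sSup ((fun y => |f' y|) '' Ioo (0:ℝ) 1) :=
            Finset.sum_le_sum hMle
        _ = (N:ℝ) * sSup ((fun y => |f' y|) '' Ioo (0:ℝ) 1) := by
            rw [Finset.sum_const, Finset.card_range, nsmul_eq_mul]
    rw [hz2, hz1, hsum_eq]
    calc (1/6 : ℝ) * (1/(N:ℝ)^2) * ∑ j ∈ Finset.range N, Mj j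
        ≤ (1/6 : ℝ) * (1/(N:ℝ)^2) * ((N:ℝ) * sSup ((fun y => |f' y|) '' Ioo (0:ℝ) 1)) :=
          mul_le_mul_of_nonneg_left hsum_le (by positivity)
      _ = (1/6) * (1/(N:ℝ)) * sSup ((fun y => |f' y|) '' Ioo (0:ℝ) 1) := by
          field_simp
end
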